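/- Let f : ℝ^d → ℝ be C² with L_H-Lipschitz Hessian, x ∈ ℝ^d, and let d ∈ ℝ^d satisfy: (i) dᵀH d = -‖d‖³ ≤ -ε_H‖d‖² for a symmetric matrix H with ‖H - ∇²f(x)‖ ≤ δ_H, (ii) ∇f(x)ᵀd ≤ 0, (iii) δ_H ≤ ε_H/4, and ε_H > 0, η > 0. Then for every α ∈ (0, 1] with α < 3/(2(L_H + η)): f(x + α·d) - f(x) ≤ -(η/6)·α³·‖d‖³. -/

import Mathlib

open RealInnerProductSpace

/-- If `h` has derivative `h'` everywhere and `h' ≥ 0` on `[0,∞)`, then `h 0 ≤ h a` for `a ≥ 0`. -/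
lemma mono_aux_neg_curv {h h' : ℝ → ℝ} (hd : ∀ t, HasDerivAt h (h' t) t)
    (hn : ∀ t, 0 ≤ t → 0 ≤ h' t) {a : ℝ} (ha : 0 ≤ a) : h 0 ≤ h a := by
  have hmono : MonotoneOn h (Set.Ici 0) := by
    apply monotoneOn_of_deriv_nonneg (convex_Ici 0)
    · exact fun s _ => (hd s).continuousAt.continuousWithinAt
    · intro s _; exact (hd s).differentiableAt.differentiableWithinAt
    · intro s hs
      rw [interior_Ici] at hs
      rw [(hd s).deriv]
      exact hn s (le_of_lt hs)
  exact hmono (by simp : (0:ℝ) ∈ Set.Ici 0) (by simpa using ha) ha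

set_option maxHeartbeats 1000000 in
theorem negative_curvature_step_decrease {n : ℕ}
    (f : EuclideanSpace ℝ (Fin n) → ℝ) (hf : ContDiff ℝ 2 f)
    (L_H η ε_H δ_H : ℝ) (hL : 0 < L_H) (hη : 0 < η) (hεH : 0 < ε_H)
    (hlip : ∀ u v : EuclideanSpace ℝ (Fin n),
      ‖fderiv ℝ (fderiv ℝ f) u - fderiv ℝ (fderiv ℝ f) v‖ ≤ L_H * ‖u - v‖)
    (x d : EuclideanSpace ℝ (Fin n))
    (A : EuclideanSpace ℝ (Fin n) →L[ℝ] EuclideanSpace ℝ (Fin n))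
    (hsymm : ∀ u v : EuclideanSpace ℝ (Fin n), ⟪A u, v⟫ = ⟪u, A v⟫)
    (hA : ∀ u : EuclideanSpace ℝ (Fin n),
      ‖fderiv ℝ (fderiv ℝ f) x u - innerSL ℝ (A u)‖ ≤ δ_H * ‖u‖)
    (hcurv_eq : ⟪d, A d⟫ = -‖d‖ ^ 3)
    (hcurv_le : ⟪d, A d⟫ ≤ -ε_H * ‖d‖ ^ 2)
    (hdesc : fderiv ℝ f x d ≤ 0)
    (hδH : δ_H ≤ ε_H / 4) :
    ∀ α : ℝ, α ∈ Set.Ioc (0:ℝ) 1 → α < 3 / (2 * (L_H + η)) →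
      f (x + α • d) - f x ≤ -(η / 6) * α ^ 3 * ‖d‖ ^ 3 := by
  intro α hα hαb
  obtain ⟨hα0, hα1⟩ := hα
  by_cases hd0 : d = 0
  · subst hd0; simp
  have hdpos : 0 < ‖d‖ := norm_pos_iff.mpr hd0
  -- curve and scalar functions
  set c : ℝ → EuclideanSpace ℝ (Fin n) := fun t => x + t • d with hcdef
  have hc0 : c 0 = x := by simp [hcdef]
  have hcd : ∀ t : ℝ, HasDerivAt c d t := by
    intro t
    have h1 : HasDerivAt (fun s : ℝ => s • d) ((1:ℝ) • d) t :=
      (hasDerivAt_id t).smul_const d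
    simpa [hcdef] using h1.const_add x
  have hfd : Differentiable ℝ f := hf.differentiable (by norm_num)
  have hf1 : ContDiff ℝ 1 (fderiv ℝ f) := hf.fderiv_right (by norm_num)
  have hfd2 : Differentiable ℝ (fderiv ℝ f) := hf1.differentiable (by norm_num)
  set g : ℝ → ℝ := fun t => f (c t) with hgdef
  set g1 : ℝ → ℝ := fun t => fderiv ℝ f (c t) d with hg1def
  set g2 : ℝ → ℝ := fun t => fderiv ℝ (fderiv ℝ f) (c t) d d with hg2def
  have hg : ∀ t, HasDerivAt g (g1 t) t := by
    intro t
    exact ((hfd (c t)).hasFDerivAt).comp_hasDerivAt t (hcd t)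
  have hg1 : ∀ t, HasDerivAt g1 (g2 t) t := by
    intro t
    have hB : HasDerivAt (fun s => fderiv ℝ f (c s)) (fderiv ℝ (fderiv ℝ f) (c t) d) t :=
      ((hfd2 (c t)).hasFDerivAt).comp_hasDerivAt t (hcd t)
    have := hB.clm_apply (hasDerivAt_const t d)
    simpa [hg1def, hg2def] using this
  -- Lipschitz bound on g2
  have hlipg2 : ∀ t : ℝ, |g2 t - g2 0| ≤ L_H * ‖d‖ ^ 3 * |t| := by
    intro t
    have heq : g2 t - g2 0 =
        ((fderiv ℝ (fderiv ℝ f) (c t) - fderiv ℝ (fderiv ℝ f) (c 0)) d) d := by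
      simp [hg2def]
    rw [heq]
    calc |((fderiv ℝ (fderiv ℝ f) (c t) - fderiv ℝ (fderiv ℝ f) (c 0)) d) d|
        ≤ ‖(fderiv ℝ (fderiv ℝ f) (c t) - fderiv ℝ (fderiv ℝ f) (c 0)) d‖ * ‖d‖ :=
          ((fderiv ℝ (fderiv ℝ f) (c t) - fderiv ℝ (fderiv ℝ f) (c 0)) d).le_opNorm d
      _ ≤ (‖fderiv ℝ (fderiv ℝ f) (c t) - fderiv ℝ (fderiv ℝ f) (c 0)‖ * ‖d‖) * ‖d‖ :=
          mul_le_mul_of_nonneg_right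
            ((fderiv ℝ (fderiv ℝ f) (c t) - fderiv ℝ (fderiv ℝ f) (c 0)).le_opNorm d)
            (norm_nonneg d)
      _ ≤ (L_H * ‖c t - c 0‖ * ‖d‖) * ‖d‖ := by
          have := hlip (c t) (c 0)
          nlinarith [norm_nonneg d, norm_nonneg (c t - c 0)]
      _ = L_H * ‖d‖ ^ 3 * |t| := by
          have : c t - c 0 = t • d := by
            simp [hcdef]
          rw [this, norm_smul]
          simp [Real.norm_eq_abs]
          ring
  -- bound on g2 0
  have hg20 : g2 0 ≤ -‖d‖ ^ 3 + δ_H * ‖d‖ ^ 2 := by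
    have h1 := hA d
    have h2 : |(fderiv ℝ (fderiv ℝ f) x d) d - (innerSL ℝ (A d)) d| ≤ (δ_H * ‖d‖) * ‖d‖ := by
      calc |(fderiv ℝ (fderiv ℝ f) x d) d - (innerSL ℝ (A d)) d|
          = |(fderiv ℝ (fderiv ℝ f) x d - innerSL ℝ (A d)) d| := by simp
        _ ≤ ‖fderiv ℝ (fderiv ℝ f) x d - innerSL ℝ (A d)‖ * ‖d‖ :=
            (fderiv ℝ (fderiv ℝ f) x d - innerSL ℝ (A d)).le_opNorm d
        _ ≤ (δ_H * ‖d‖) * ‖d‖ := mul_le_mul_of_nonneg_right h1 (norm_nonneg d)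
    have h3 : (innerSL ℝ (A d)) d = ⟪A d, d⟫ := rfl
    have h4 : ⟪A d, d⟫ = -‖d‖ ^ 3 := by rw [hsymm d d]; exact hcurv_eq
    have h5 : g2 0 = (fderiv ℝ (fderiv ℝ f) x d) d := by rw [hg2def]; simp [hc0]
    rw [h5]
    have := abs_le.mp h2
    nlinarith [this.2]
  -- Taylor-type bound via two monotonicity arguments
  set C : ℝ := L_H * ‖d‖ ^ 3 with hCdef
  set ψ : ℝ → ℝ := fun t => f x + t * g1 0 + t ^ 2 / 2 * g2 0 + C * t ^ 3 / 6 - g t with hψdef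
  set ψ' : ℝ → ℝ := fun t => g1 0 + t * g2 0 + C * t ^ 2 / 2 - g1 t with hψ'def
  set ψ'' : ℝ → ℝ := fun t => g2 0 + C * t - g2 t with hψ''def
  have hdψ : ∀ t, HasDerivAt ψ (ψ' t) t := by
    intro t
    have h1 : HasDerivAt (fun t : ℝ => f x + t * g1 0 + t ^ 2 / 2 * g2 0 + C * t ^ 3 / 6)
        (g1 0 + t * g2 0 + C * t ^ 2 / 2) t := by
      have := (((hasDerivAt_id t).mul_const (g1 0)).const_add (f x)).add
        (((hasDerivAt_pow 2 t).div_const 2).mul_const (g2 0)) |>.add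
        (((hasDerivAt_pow 3 t).const_mul C).div_const 6)
      exact this.congr_deriv (by norm_num; ring)
    exact h1.sub (hg t)
  have hdψ' : ∀ t, HasDerivAt ψ' (ψ'' t) t := by
    intro t
    have h1 : HasDerivAt (fun t : ℝ => g1 0 + t * g2 0 + C * t ^ 2 / 2)
        (g2 0 + C * t) t := by
      have := (((hasDerivAt_id t).mul_const (g2 0)).const_add (g1 0)).add
        (((hasDerivAt_pow 2 t).const_mul C).div_const 2)
      exact this.congr_deriv (by norm_num; ring)
    exact h1.sub (hg1 t)
  have hψ''nn : ∀ t, 0 ≤ t → 0 ≤ ψ'' t := by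
    intro t ht
    have := abs_le.mp (hlipg2 t)
    have habs : |t| = t := abs_of_nonneg ht
    rw [habs] at this
    simp only [hψ''def]
    linarith [this.2]
  have hψ'nn : ∀ t, 0 ≤ t → 0 ≤ ψ' t := by
    intro t ht
    have h0 : ψ' 0 = 0 := by simp [hψ'def, hc0]
    have := mono_aux_neg_curv hdψ' hψ''nn ht
    linarith
  have hψα : 0 ≤ ψ α := by
    have h0 : ψ 0 = 0 := by simp [hψdef, hgdef, hc0]
    have := mono_aux_neg_curv hdψ hψ'nn hα0.le
    linarith
  -- assemble
  have htaylor : f (x + α • d) ≤ f x + α * g1 0 + α ^ 2 / 2 * g2 0 + C * α ^ 3 / 6 := by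
    have : g α = f (x + α • d) := by simp [hgdef, hcdef]
    simp only [hψdef] at hψα
    linarith [hψα, this ▸ (le_refl (g α))]
  have hg10 : g1 0 ≤ 0 := by simpa [hg1def, hc0] using hdesc
  -- ‖d‖ ≥ ε_H
  have hdge : ε_H ≤ ‖d‖ := by
    have h1 : -‖d‖ ^ 3 ≤ -ε_H * ‖d‖ ^ 2 := hcurv_eq ▸ hcurv_le
    have hsq : 0 < ‖d‖ ^ 2 := by positivity
    have h2 : ε_H * ‖d‖ ^ 2 ≤ ‖d‖ * ‖d‖ ^ 2 := by
      have h3 : ‖d‖ * ‖d‖ ^ 2 = ‖d‖ ^ 3 := by ring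
      linarith
    exact le_of_mul_le_mul_right h2 hsq
  have hδd : δ_H * ‖d‖ ^ 2 ≤ ‖d‖ ^ 3 / 4 := by
    have h4 : δ_H ≤ ‖d‖ / 4 := by linarith
    calc δ_H * ‖d‖ ^ 2 ≤ ‖d‖ / 4 * ‖d‖ ^ 2 :=
          mul_le_mul_of_nonneg_right h4 (sq_nonneg ‖d‖)
      _ = ‖d‖ ^ 3 / 4 := by ring
  have hαL : α * (2 * (L_H + η)) < 3 := (lt_div_iff₀ (by positivity)).mp hαb
  have hfinal : f x + α * g1 0 + α ^ 2 / 2 * g2 0 + C * α ^ 3 / 6 - f x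
      ≤ -(η / 6) * α ^ 3 * ‖d‖ ^ 3 := by
    have hprod : 0 ≤ (α ^ 2 * ‖d‖ ^ 3) * (3 - α * (2 * (L_H + η))) :=
      mul_nonneg (mul_nonneg (sq_nonneg α) (by positivity)) (by linarith)
    have hα2 : (0:ℝ) ≤ α ^ 2 / 2 := by positivity
    have h2 : α ^ 2 / 2 * g2 0 ≤ α ^ 2 / 2 * (-‖d‖ ^ 3 + δ_H * ‖d‖ ^ 2) :=
      mul_le_mul_of_nonneg_left hg20 hα2
    have h3 : α ^ 2 / 2 * (δ_H * ‖d‖ ^ 2) ≤ α ^ 2 / 2 * (‖d‖ ^ 3 / 4) :=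
      mul_le_mul_of_nonneg_left hδd hα2
    have h1 : α * g1 0 ≤ 0 := mul_nonpos_of_nonneg_of_nonpos hα0.le hg10
    have hpos : 0 ≤ (L_H + η) * (α ^ 3 * ‖d‖ ^ 3) := by positivity
    rw [hCdef]
    nlinarith [hprod, hpos, h1, h2, h3]
  linarith [htaylor, hfinal]
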